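/- Let b₁, b₂ > 0 and g_D, g_N ∈ ℝ. Then there exist unique constants α₁, β₁, α₂, β₂ ∈ ℝ such that the piecewise function u defined by u(x) = α₁·exp(√b₁·x) + β₁·exp(-√b₁·x) for x ∈ [0, 1/2) and u(x) = α₂·exp(√b₂·x) + β₂·exp(-√b₂·x) for x ∈ (1/2, 1] satisfies: the homogeneous boundary conditions u(0) = 0 and u(1) = 0, the jump condition lim_{x→1/2⁺} u(x) - lim_{x→1/2⁻} u(x) = g_D, and the derivative jump condition lim_{x→1/2⁺} u'(x) - lim_{x→1/2⁻} u'(x) = g_N. Consequently u is the unique piecewise solution of -u'' + b_i u = 0 on each subinterval satisfying these interface and boundary conditions. -/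

import Mathlib

open Filter Topology

/-- The piecewise exponential function with coefficients
`c = ((α₁, β₁), (α₂, β₂))`: it equals `α₁ e^{√b₁ x} + β₁ e^{-√b₁ x}` for `x < 1/2`
and `α₂ e^{√b₂ x} + β₂ e^{-√b₂ x}` for `x ≥ 1/2` (only the values on
`[0,1/2) ∪ (1/2,1]` matter). -/
noncomputable def piecewiseExp (b₁ b₂ : ℝ) (c : (ℝ × ℝ) × ℝ × ℝ) : ℝ → ℝ := fun x =>
  if x < 1 / 2 then
    c.1.1 * Real.exp (Real.sqrt b₁ * x) + c.1.2 * Real.exp (-Real.sqrt b₁ * x)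
  else
    c.2.1 * Real.exp (Real.sqrt b₂ * x) + c.2.2 * Real.exp (-Real.sqrt b₂ * x)

noncomputable def br (a b k : ℝ) : ℝ → ℝ := fun x =>
  a * Real.exp (k * x) + b * Real.exp (-k * x)

lemma br_hasDerivAt (a b k x : ℝ) :
    HasDerivAt (br a b k) (br (a * k) (-(b * k)) k x) x := by
  have h1 : HasDerivAt (fun y : ℝ => Real.exp (k * y)) (Real.exp (k * x) * k) x := by
    simpa using ((hasDerivAt_id x).const_mul k).exp
  have h2 : HasDerivAt (fun y : ℝ => Real.exp (-k * y)) (Real.exp (-k * x) * (-k)) x := by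
    simpa using ((hasDerivAt_id x).const_mul (-k)).exp
  have h := (h1.const_mul a).add (h2.const_mul b)
  unfold br
  exact h.congr_deriv (by ring)

lemma br_deriv (a b k : ℝ) : deriv (br a b k) = br (a * k) (-(b * k)) k :=
  funext fun x => (br_hasDerivAt a b k x).deriv

lemma br_cont (a b k : ℝ) : Continuous (br a b k) := by
  unfold br; continuity

lemma pw_eq_left (b₁ b₂ : ℝ) (c : (ℝ × ℝ) × ℝ × ℝ) {x : ℝ} (hx : x < 1 / 2) :
    piecewiseExp b₁ b₂ c x = br c.1.1 c.1.2 (Real.sqrt b₁) x := by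
  simp only [piecewiseExp, br, if_pos hx]

lemma pw_eq_right (b₁ b₂ : ℝ) (c : (ℝ × ℝ) × ℝ × ℝ) {x : ℝ} (hx : ¬ x < 1 / 2) :
    piecewiseExp b₁ b₂ c x = br c.2.1 c.2.2 (Real.sqrt b₂) x := by
  simp only [piecewiseExp, br, if_neg hx]

lemma pw_deriv_left (b₁ b₂ : ℝ) (c : (ℝ × ℝ) × ℝ × ℝ) {x : ℝ} (hx : x < 1 / 2) :
    deriv (piecewiseExp b₁ b₂ c) x
      = br (c.1.1 * Real.sqrt b₁) (-(c.1.2 * Real.sqrt b₁)) (Real.sqrt b₁) x := by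
  have h : piecewiseExp b₁ b₂ c =ᶠ[𝓝 x] br c.1.1 c.1.2 (Real.sqrt b₁) := by
    filter_upwards [Iio_mem_nhds hx] with y hy using pw_eq_left b₁ b₂ c hy
  rw [h.deriv_eq, br_deriv]

lemma pw_deriv_right (b₁ b₂ : ℝ) (c : (ℝ × ℝ) × ℝ × ℝ) {x : ℝ} (hx : 1 / 2 < x) :
    deriv (piecewiseExp b₁ b₂ c) x
      = br (c.2.1 * Real.sqrt b₂) (-(c.2.2 * Real.sqrt b₂)) (Real.sqrt b₂) x := by
  have h : piecewiseExp b₁ b₂ c =ᶠ[𝓝 x] br c.2.1 c.2.2 (Real.sqrt b₂) := by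
    filter_upwards [Ioi_mem_nhds hx] with y hy using pw_eq_right b₁ b₂ c (not_lt.2 hy.le)
  rw [h.deriv_eq, br_deriv]

lemma pw_tendsto_left (b₁ b₂ : ℝ) (c : (ℝ × ℝ) × ℝ × ℝ) :
    Tendsto (piecewiseExp b₁ b₂ c) (𝓝[<] (1 / 2 : ℝ))
      (𝓝 (br c.1.1 c.1.2 (Real.sqrt b₁) (1 / 2))) := by
  refine Tendsto.congr' ?_ (((br_cont _ _ _).tendsto _).mono_left nhdsWithin_le_nhds)
  filter_upwards [self_mem_nhdsWithin] with y hy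
  exact (pw_eq_left b₁ b₂ c hy).symm

lemma pw_tendsto_right (b₁ b₂ : ℝ) (c : (ℝ × ℝ) × ℝ × ℝ) :
    Tendsto (piecewiseExp b₁ b₂ c) (𝓝[>] (1 / 2 : ℝ))
      (𝓝 (br c.2.1 c.2.2 (Real.sqrt b₂) (1 / 2))) := by
  refine Tendsto.congr' ?_ (((br_cont _ _ _).tendsto _).mono_left nhdsWithin_le_nhds)
  filter_upwards [self_mem_nhdsWithin] with y hy
  exact (pw_eq_right b₁ b₂ c (not_lt.2 (le_of_lt hy))).symm

lemma pw_deriv_tendsto_left (b₁ b₂ : ℝ) (c : (ℝ × ℝ) × ℝ × ℝ) :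
    Tendsto (deriv (piecewiseExp b₁ b₂ c)) (𝓝[<] (1 / 2 : ℝ))
      (𝓝 (br (c.1.1 * Real.sqrt b₁) (-(c.1.2 * Real.sqrt b₁)) (Real.sqrt b₁) (1 / 2))) := by
  refine Tendsto.congr' ?_ (((br_cont _ _ _).tendsto _).mono_left nhdsWithin_le_nhds)
  filter_upwards [self_mem_nhdsWithin] with y hy
  exact (pw_deriv_left b₁ b₂ c hy).symm

lemma pw_deriv_tendsto_right (b₁ b₂ : ℝ) (c : (ℝ × ℝ) × ℝ × ℝ) :
    Tendsto (deriv (piecewiseExp b₁ b₂ c)) (𝓝[>] (1 / 2 : ℝ))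
      (𝓝 (br (c.2.1 * Real.sqrt b₂) (-(c.2.2 * Real.sqrt b₂)) (Real.sqrt b₂) (1 / 2))) := by
  refine Tendsto.congr' ?_ (((br_cont _ _ _).tendsto _).mono_left nhdsWithin_le_nhds)
  filter_upwards [self_mem_nhdsWithin] with y hy
  exact (pw_deriv_right b₁ b₂ c hy).symm

lemma pw_deriv2_left (b₁ b₂ : ℝ) (hb₁ : 0 ≤ b₁) (c : (ℝ × ℝ) × ℝ × ℝ) {x : ℝ}
    (hx : x < 1 / 2) :
    deriv (deriv (piecewiseExp b₁ b₂ c)) x = b₁ * piecewiseExp b₁ b₂ c x := by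
  have h : deriv (piecewiseExp b₁ b₂ c)
      =ᶠ[𝓝 x] br (c.1.1 * Real.sqrt b₁) (-(c.1.2 * Real.sqrt b₁)) (Real.sqrt b₁) := by
    filter_upwards [Iio_mem_nhds hx] with y hy using pw_deriv_left b₁ b₂ c hy
  rw [h.deriv_eq, br_deriv, pw_eq_left b₁ b₂ c hx]
  have hk : Real.sqrt b₁ * Real.sqrt b₁ = b₁ := Real.mul_self_sqrt hb₁
  unfold br
  linear_combination (c.1.1 * Real.exp (Real.sqrt b₁ * x)
    + c.1.2 * Real.exp (-Real.sqrt b₁ * x)) * hk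

lemma pw_deriv2_right (b₁ b₂ : ℝ) (hb₂ : 0 ≤ b₂) (c : (ℝ × ℝ) × ℝ × ℝ) {x : ℝ}
    (hx : 1 / 2 < x) :
    deriv (deriv (piecewiseExp b₁ b₂ c)) x = b₂ * piecewiseExp b₁ b₂ c x := by
  have h : deriv (piecewiseExp b₁ b₂ c)
      =ᶠ[𝓝 x] br (c.2.1 * Real.sqrt b₂) (-(c.2.2 * Real.sqrt b₂)) (Real.sqrt b₂) := by
    filter_upwards [Ioi_mem_nhds hx] with y hy using pw_deriv_right b₁ b₂ c hy
  rw [h.deriv_eq, br_deriv, pw_eq_right b₁ b₂ c (not_lt.2 hx.le)]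
  have hk : Real.sqrt b₂ * Real.sqrt b₂ = b₂ := Real.mul_self_sqrt hb₂
  unfold br
  linear_combination (c.2.1 * Real.exp (Real.sqrt b₂ * x)
    + c.2.2 * Real.exp (-Real.sqrt b₂ * x)) * hk

lemma br_zero (a b k : ℝ) : br a b k 0 = a + b := by simp [br]

lemma br_half (a b k : ℝ) :
    br a b k (1 / 2) = a * Real.exp (k / 2) + b * (Real.exp (k / 2))⁻¹ := by
  unfold br
  rw [show k * (1 / 2) = k / 2 by ring, show -k * (1 / 2) = -(k / 2) by ring, Real.exp_neg]

lemma br_one (a b k : ℝ) :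
    br a b k 1 = a * (Real.exp (k / 2)) ^ 2 + b * ((Real.exp (k / 2)) ^ 2)⁻¹ := by
  unfold br
  rw [show k * 1 = k / 2 + k / 2 by ring, show -k * 1 = -(k / 2 + k / 2) by ring,
    Real.exp_neg, Real.exp_add]
  ring

lemma cond_iff (b₁ b₂ : ℝ) (hb₁ : 0 < b₁) (hb₂ : 0 < b₂) (gD gN : ℝ)
    (c : (ℝ × ℝ) × ℝ × ℝ) :
    (piecewiseExp b₁ b₂ c 0 = 0 ∧
      piecewiseExp b₁ b₂ c 1 = 0 ∧
      (∃ Lp Lm : ℝ,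
        Tendsto (piecewiseExp b₁ b₂ c) (𝓝[>] (1 / 2)) (𝓝 Lp) ∧
        Tendsto (piecewiseExp b₁ b₂ c) (𝓝[<] (1 / 2)) (𝓝 Lm) ∧
        Lp - Lm = gD) ∧
      (∃ Mp Mm : ℝ,
        Tendsto (deriv (piecewiseExp b₁ b₂ c)) (𝓝[>] (1 / 2)) (𝓝 Mp) ∧
        Tendsto (deriv (piecewiseExp b₁ b₂ c)) (𝓝[<] (1 / 2)) (𝓝 Mm) ∧
        Mp - Mm = gN) ∧
      (∀ x ∈ Set.Ioo (0 : ℝ) (1 / 2),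
        -(deriv (deriv (piecewiseExp b₁ b₂ c)) x) + b₁ * piecewiseExp b₁ b₂ c x = 0) ∧
      (∀ x ∈ Set.Ioo (1 / 2 : ℝ) 1,
        -(deriv (deriv (piecewiseExp b₁ b₂ c)) x) + b₂ * piecewiseExp b₁ b₂ c x = 0)) ↔
    (c.1.1 + c.1.2 = 0 ∧
      c.2.1 * (Real.exp (Real.sqrt b₂ / 2)) ^ 2
        + c.2.2 * ((Real.exp (Real.sqrt b₂ / 2)) ^ 2)⁻¹ = 0 ∧
      (c.2.1 * Real.exp (Real.sqrt b₂ / 2) + c.2.2 * (Real.exp (Real.sqrt b₂ / 2))⁻¹)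
        - (c.1.1 * Real.exp (Real.sqrt b₁ / 2) + c.1.2 * (Real.exp (Real.sqrt b₁ / 2))⁻¹)
        = gD ∧
      (c.2.1 * Real.sqrt b₂ * Real.exp (Real.sqrt b₂ / 2)
          - c.2.2 * Real.sqrt b₂ * (Real.exp (Real.sqrt b₂ / 2))⁻¹)
        - (c.1.1 * Real.sqrt b₁ * Real.exp (Real.sqrt b₁ / 2)
          - c.1.2 * Real.sqrt b₁ * (Real.exp (Real.sqrt b₁ / 2))⁻¹) = gN) := by
  constructor
  · rintro ⟨h0, h1, ⟨Lp, Lm, hLp, hLm, hjD⟩, ⟨Mp, Mm, hMp, hMm, hjN⟩, -, -⟩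
    rw [pw_eq_left b₁ b₂ c (by norm_num : (0:ℝ) < 1 / 2), br_zero] at h0
    rw [pw_eq_right b₁ b₂ c (by norm_num : ¬ (1:ℝ) < 1 / 2), br_one] at h1
    have hLp' : Lp = br c.2.1 c.2.2 (Real.sqrt b₂) (1 / 2) :=
      tendsto_nhds_unique hLp (pw_tendsto_right b₁ b₂ c)
    have hLm' : Lm = br c.1.1 c.1.2 (Real.sqrt b₁) (1 / 2) :=
      tendsto_nhds_unique hLm (pw_tendsto_left b₁ b₂ c)
    have hMp' : Mp = br (c.2.1 * Real.sqrt b₂) (-(c.2.2 * Real.sqrt b₂)) (Real.sqrt b₂) (1/2) :=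
      tendsto_nhds_unique hMp (pw_deriv_tendsto_right b₁ b₂ c)
    have hMm' : Mm = br (c.1.1 * Real.sqrt b₁) (-(c.1.2 * Real.sqrt b₁)) (Real.sqrt b₁) (1/2) :=
      tendsto_nhds_unique hMm (pw_deriv_tendsto_left b₁ b₂ c)
    rw [hLp', hLm', br_half, br_half] at hjD
    rw [hMp', hMm', br_half, br_half] at hjN
    exact ⟨h0, h1, hjD, by linear_combination hjN⟩
  · rintro ⟨r1, r2, r3, r4⟩
    refine ⟨?_, ?_, ?_, ?_, ?_, ?_⟩
    · rw [pw_eq_left b₁ b₂ c (by norm_num : (0:ℝ) < 1 / 2), br_zero]; exact r1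
    · rw [pw_eq_right b₁ b₂ c (by norm_num : ¬ (1:ℝ) < 1 / 2), br_one]; exact r2
    · exact ⟨_, _, pw_tendsto_right b₁ b₂ c, pw_tendsto_left b₁ b₂ c,
        by rw [br_half, br_half]; exact r3⟩
    · exact ⟨_, _, pw_deriv_tendsto_right b₁ b₂ c, pw_deriv_tendsto_left b₁ b₂ c,
        by rw [br_half, br_half]; linear_combination r4⟩
    · intro x hx
      rw [pw_deriv2_left b₁ b₂ hb₁.le c hx.2]; ring
    · intro x hx
      rw [pw_deriv2_right b₁ b₂ hb₂.le c hx.1]; ring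

/-- For `b₁, b₂ > 0` and jump data `g_D, g_N`, there are unique constants
`α₁, β₁, α₂, β₂` such that the piecewise exponential function `u` satisfies the
homogeneous boundary conditions `u(0) = u(1) = 0`, the interface jump conditions
`[u] = g_D` and `[u'] = g_N` at `x = 1/2` (right limit minus left limit), and hence `u`
is the unique piecewise solution of `-u'' + bᵢ u = 0` on each subinterval with these
interface and boundary conditions. -/
theorem unique_piecewise_exp_interface_solution
    (b₁ b₂ : ℝ) (hb₁ : 0 < b₁) (hb₂ : 0 < b₂) (gD gN : ℝ) :
    ∃! c : (ℝ × ℝ) × ℝ × ℝ,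
      piecewiseExp b₁ b₂ c 0 = 0 ∧
      piecewiseExp b₁ b₂ c 1 = 0 ∧
      (∃ Lp Lm : ℝ,
        Tendsto (piecewiseExp b₁ b₂ c) (𝓝[>] (1 / 2)) (𝓝 Lp) ∧
        Tendsto (piecewiseExp b₁ b₂ c) (𝓝[<] (1 / 2)) (𝓝 Lm) ∧
        Lp - Lm = gD) ∧
      (∃ Mp Mm : ℝ,
        Tendsto (deriv (piecewiseExp b₁ b₂ c)) (𝓝[>] (1 / 2)) (𝓝 Mp) ∧
        Tendsto (deriv (piecewiseExp b₁ b₂ c)) (𝓝[<] (1 / 2)) (𝓝 Mm) ∧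
        Mp - Mm = gN) ∧
      (∀ x ∈ Set.Ioo (0 : ℝ) (1 / 2),
        -(deriv (deriv (piecewiseExp b₁ b₂ c)) x) + b₁ * piecewiseExp b₁ b₂ c x = 0) ∧
      (∀ x ∈ Set.Ioo (1 / 2 : ℝ) 1,
        -(deriv (deriv (piecewiseExp b₁ b₂ c)) x) + b₂ * piecewiseExp b₁ b₂ c x = 0) := by
  simp only [cond_iff b₁ b₂ hb₁ hb₂ gD gN]
  set s := Real.sqrt b₁ with hs_def
  set t := Real.sqrt b₂ with ht_def
  have hs : 0 < s := Real.sqrt_pos.2 hb₁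
  have ht : 0 < t := Real.sqrt_pos.2 hb₂
  set u := Real.exp (s / 2) with hu_def
  set v := Real.exp (t / 2) with hv_def
  have hu1 : 1 < u := Real.one_lt_exp_iff.2 (by linarith)
  have hv1 : 1 < v := Real.one_lt_exp_iff.2 (by linarith)
  have hu0 : u ≠ 0 := by linarith
  have hv0 : v ≠ 0 := by linarith
  have hv0' : 0 < v := by linarith
  have hP : 0 < u ^ 2 - 1 := by nlinarith
  have hS : 0 < s * (u ^ 2 + 1) := by nlinarith
  have hQ : v - v ^ 3 < 0 := by nlinarith [mul_pos hv0' (mul_pos hv0' hv0'), sq_nonneg (v - 1), sq_nonneg (v + 1)]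
  have hT : 0 < t * (v + v ^ 3) := by nlinarith
  have hD : 0 < (u ^ 2 - 1) * (t * (v + v ^ 3)) - (v - v ^ 3) * (s * (u ^ 2 + 1)) := by
    nlinarith [mul_pos hP hT, mul_neg_of_neg_of_pos hQ hS]
  set A : ℝ := u * (gN * (v - v ^ 3) - gD * (t * (v + v ^ 3)))
      / ((u ^ 2 - 1) * (t * (v + v ^ 3)) - (v - v ^ 3) * (s * (u ^ 2 + 1))) with hA_def
  set B : ℝ := (gN * (u ^ 2 - 1) - gD * (s * (u ^ 2 + 1)))
      / ((u ^ 2 - 1) * (t * (v + v ^ 3)) - (v - v ^ 3) * (s * (u ^ 2 + 1))) with hB_def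
  refine ⟨((A, -A), (B, -B * v ^ 4)), ⟨?_, ?_, ?_, ?_⟩, ?_⟩
  · dsimp only; ring
  · dsimp only
    field_simp
    ring
  · dsimp only
    rw [hA_def, hB_def]
    field_simp
    rw [div_eq_iff (fun h => hD.ne' (by linear_combination v * h))]
    ring
  · dsimp only
    rw [hA_def, hB_def]
    field_simp
    rw [div_eq_iff (fun h => hD.ne' (by linear_combination v * h))]
    ring
  · rintro ⟨⟨a1, b1⟩, a2, b2⟩ ⟨e1, e2, e3, e4⟩
    dsimp only at e1 e2 e3 e4
    have hb1 : b1 = -a1 := by linarith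
    have h2 : (v ^ 2) * (v ^ 2)⁻¹ = 1 := mul_inv_cancel₀ (pow_ne_zero 2 hv0)
    have hb2 : b2 = -a2 * v ^ 4 := by linear_combination (v ^ 2) * e2 - b2 * h2
    subst hb1; subst hb2
    have huu : u * u⁻¹ = 1 := mul_inv_cancel₀ hu0
    have hvv : v * v⁻¹ = 1 := mul_inv_cancel₀ hv0
    have G3 : a2 * (v - v ^ 3) * u - a1 * (u ^ 2 - 1) = gD * u := by
      linear_combination u * e3 + a2 * v ^ 3 * u * hvv - a1 * huu
    have G4 : a2 * (t * (v + v ^ 3)) * u - a1 * (s * (u ^ 2 + 1)) = gN * u := by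
      linear_combination u * e4 - a2 * t * v ^ 3 * u * hvv + a1 * s * huu
    have ha1 : a1 = A := by
      rw [hA_def, eq_div_iff hD.ne']
      linear_combination (v - v ^ 3) * G4 - (t * (v + v ^ 3)) * G3
    have ha2 : a2 = B := by
      rw [hB_def, eq_div_iff hD.ne']
      apply mul_left_cancel₀ hu0
      linear_combination (u ^ 2 - 1) * G4 - (s * (u ^ 2 + 1)) * G3
    simp [Prod.ext_iff, ha1, ha2]
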